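/- For μ_u-almost every x ∈ X, the Radon–Nikodym derivative satisfies (dμ_p/dμ_u)(x) = ENNReal.ofReal(g(x)/(1−g(x))); that is, the density ratio of the positive to the unlabeled distribution factors through the NTC as the function y ↦ y/(1−y). -/

import Mathlib

open MeasureTheory ENNReal NNReal

/-- The paper's Eqs. (7)–(8): the density ratio of the positive to the
unlabeled distribution factors through the Non-Traditional Classifier
`g x = f_p x / (f_p x + f_u x)` as the function `y ↦ y / (1 - y)`:
for `μu`-almost every `x`, `(dμp/dμu)(x) = g x / (1 - g x)`. -/
theorem rnDeriv_eq_ntc_odds {X : Type*} [MeasurableSpace X]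
    (ν : Measure X) [SigmaFinite ν] (f_p f_u : X → ℝ≥0)
    (hfp : Measurable f_p) (hfu : Measurable f_u)
    (μp : Measure X) (hμp : μp = ν.withDensity fun x => (f_p x : ℝ≥0∞))
    (μu : Measure X) (hμu : μu = ν.withDensity fun x => (f_u x : ℝ≥0∞))
    [IsProbabilityMeasure μp] [IsProbabilityMeasure μu] (hac : μp ≪ μu)
    (g : X → ℝ) (hg : g = fun x => (f_p x : ℝ) / ((f_p x : ℝ) + (f_u x : ℝ))) :
    ∀ᵐ x ∂μu, μp.rnDeriv μu x = ENNReal.ofReal (g x / (1 - g x)) := by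
  have hfp' : Measurable fun x => (f_p x : ℝ≥0∞) := hfp.coe_nnreal_ennreal
  have hfu' : Measurable fun x => (f_u x : ℝ≥0∞) := hfu.coe_nnreal_ennreal
  set h : X → ℝ≥0∞ := fun x => (f_p x : ℝ≥0∞) / (f_u x : ℝ≥0∞) with hh
  have hhm : Measurable h := hfp'.div hfu'
  -- μu-a.e., f_u x ≠ 0
  have hupos : ∀ᵐ x ∂μu, f_u x ≠ 0 := by
    rw [hμu, ae_withDensity_iff hfu']
    filter_upwards with x hx
    simpa using hx
  -- μu of {f_u = 0} is 0, so μp of it is 0, so ν-a.e. on it f_p = 0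
  have hset : μu {x | f_u x = 0} = 0 := by
    rw [hμu, withDensity_apply_eq_zero hfu']
    convert measure_empty (μ := ν)
    ext x; simp (config := {contextual := true})
  have hpset : μp {x | f_u x = 0} = 0 := hac hset
  have hν0 : ∀ᵐ x ∂ν, f_u x = 0 → f_p x = 0 := by
    rw [hμp, withDensity_apply_eq_zero hfp'] at hpset
    rw [ae_iff]
    refine measure_mono_null ?_ hpset
    intro x hx
    simp only [Set.mem_setOf_eq, Classical.not_imp] at hx
    exact ⟨by exact_mod_cast hx.2, hx.1⟩
  -- μp = μu.withDensity h
  have key : μp = μu.withDensity h := by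
    rw [hμu, ← withDensity_mul ν hfu' hhm, hμp]
    refine withDensity_congr_ae ?_
    filter_upwards [hν0] with x hx
    rcases eq_or_ne (f_u x) 0 with h0 | h0
    · simp [hh, h0, hx h0]
    · simp only [hh, Pi.mul_apply]
      rw [ENNReal.mul_div_cancel (by exact_mod_cast h0) (by simp)]
  have hrn : μp.rnDeriv μu =ᵐ[μu] h := by
    rw [key]; exact Measure.rnDeriv_withDensity μu hhm
  filter_upwards [hrn, hupos] with x hx hx0
  rw [hx, hg]
  have hupos' : (0 : ℝ) < f_u x := by positivity
  have hsum : (0 : ℝ) < (f_p x : ℝ) + f_u x := by positivity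
  have h1g : 1 - (f_p x : ℝ) / ((f_p x : ℝ) + f_u x) = (f_u x : ℝ) / ((f_p x : ℝ) + f_u x) := by
    field_simp
    ring
  simp only [h1g]
  have h2 : ((f_p x : ℝ) / ((f_p x : ℝ) + f_u x)) / ((f_u x : ℝ) / ((f_p x : ℝ) + f_u x))
      = (f_p x : ℝ) / f_u x := by field_simp
  rw [h2]
  rw [ENNReal.ofReal_div_of_pos hupos']
  simp [hh, ENNReal.ofReal_coe_nnreal]
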